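/- If a partial coloring of an n×n square uniquely extends to L(n, 2n-2), then there do not exist rows i₁ ≠ i₂ and columns j₁ ≠ j₂ such that all four entries (i₁,j₁), (i₁,j₂), (i₂,j₁), (i₂,j₂) are uncolored. -/
import Mathlib


/-- An `L(n,k)`: an `n × n` array colored with `k` colors such that all entries
in any row and any column have distinct colors. -/
def IsLatin (n k : ℕ) (L : Fin n → Fin n → Fin k) : Prop :=
  (∀ i : Fin n, Function.Injective (L i)) ∧
  (∀ j : Fin n, Function.Injective (fun i => L i j))

/-- `L` extends the partial coloring `P`. -/
def ExtendsPC {n k : ℕ} (P : Fin n → Fin n → Option (Fin k))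
    (L : Fin n → Fin n → Fin k) : Prop :=
  ∀ i j c, P i j = some c → L i j = c

/-- The partial coloring `P` uniquely extends to an `L(n,k)`. -/
def UniquelyExtends (n k : ℕ) (P : Fin n → Fin n → Option (Fin k)) : Prop :=
  ∃! L : Fin n → Fin n → Fin k, IsLatin n k L ∧ ExtendsPC P L

/-- Number of uncolored entries of a partial coloring. -/
def numUncolored {n k : ℕ} (P : Fin n → Fin n → Option (Fin k)) : ℕ :=
  (Finset.univ.filter (fun p : Fin n × Fin n => P p.1 p.2 = none)).card

/-- Number of colored entries of a partial coloring. -/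
def numColored {n k : ℕ} (P : Fin n → Fin n → Option (Fin k)) : ℕ :=
  (Finset.univ.filter (fun p : Fin n × Fin n => P p.1 p.2 ≠ none)).card

/-- The defining number `d(L(n,k))`. -/
noncomputable def definingNumber (n k : ℕ) : ℕ :=
  sInf {m | ∃ P : Fin n → Fin n → Option (Fin k),
    UniquelyExtends n k P ∧ numColored P = m}

/-- The set of available colors for entry `(i,j)`: colors not appearing among
the colored entries of row `i` or column `j`. -/
def availColors {n k : ℕ} (P : Fin n → Fin n → Option (Fin k)) (i j : Fin n) :
    Finset (Fin k) :=
  Finset.univ.filter (fun c => (∀ w, P i w ≠ some c) ∧ (∀ h, P h j ≠ some c))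

section helpers

variable {n : ℕ} {P : Fin n → Fin n → Option (Fin (2*n-2))}
  {L : Fin n → Fin n → Fin (2*n-2)}

/-- Single-cell trade: every color appears in row `i` or column `j` whenever `(i,j)`
is uncolored (otherwise we could recolor that cell). -/
lemma cover (hLat : IsLatin n (2*n-2) L) (hExt : ExtendsPC P L)
    (hU : ∀ M, (IsLatin n (2*n-2) M ∧ ExtendsPC P M) → M = L)
    {i j : Fin n} (hij : P i j = none) (e : Fin (2*n-2)) :
    (∃ w, L i w = e) ∨ (∃ v, L v j = e) := by
  by_contra hno
  push_neg at hno
  obtain ⟨hrow, hcol⟩ := hno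
  set L' : Fin n → Fin n → Fin (2*n-2) :=
    fun x y => if x = i then (if y = j then e else L x y) else L x y with hL'
  have hlat' : IsLatin n (2*n-2) L' := by
    constructor
    · intro x
      by_cases hx : x = i
      · subst hx
        intro y y' h
        simp only [hL', if_pos rfl] at h
        by_cases hy : y = j <;> by_cases hy' : y' = j
        · rw [hy, hy']
        · rw [if_pos hy, if_neg hy'] at h
          exact absurd h.symm (hrow y')
        · rw [if_neg hy, if_pos hy'] at h
          exact absurd h (hrow y)
        · rw [if_neg hy, if_neg hy'] at h
          exact hLat.1 x h
      · have : L' x = L x := by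
          funext y; simp [hL', hx]
        rw [this]; exact hLat.1 x
    · intro y
      by_cases hy : y = j
      · subst hy
        intro x x' h
        simp only [hL'] at h
        by_cases hx : x = i <;> by_cases hx' : x' = i
        · rw [hx, hx']
        · simp only [hx, hx', if_true, if_false, ite_true, ite_false, if_pos rfl, if_neg] at h
          exact absurd h.symm (hcol x')
        · simp only [hx, hx', if_true, if_false, ite_true, ite_false, if_pos rfl, if_neg] at h
          exact absurd h (hcol x)
        · simp only [hx, hx', if_false, ite_false, if_neg] at h
          exact hLat.2 y h
      · have : (fun x => L' x y) = (fun x => L x y) := by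
          funext x; simp [hL', hy]
        rw [this]; exact hLat.2 y
  have hext' : ExtendsPC P L' := by
    intro x y c0 hsome
    by_cases hx : x = i
    · by_cases hy : y = j
      · rw [hx, hy, hij] at hsome; cases hsome
      · simp only [hL', hx, if_pos rfl, if_neg hy]
        have := hExt x y c0 hsome
        rwa [hx] at this
    · simp only [hL', if_neg hx]
      exact hExt x y c0 hsome
  have hEq : L' = L := hU L' ⟨hlat', hext'⟩
  have : L' i j = L i j := by rw [hEq]
  simp only [hL', if_pos rfl] at this
  exact hrow j this.symm

/-- At an uncolored corner `(i,j)` of a rectangle, one of the two adjacent corner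
colors is "available" at `(i,j)`. -/
lemma avail_pair (hLat : IsLatin n (2*n-2) L) (hExt : ExtendsPC P L)
    (hU : ∀ M, (IsLatin n (2*n-2) M ∧ ExtendsPC P M) → M = L)
    {i i' j j' : Fin n} (hii : i ≠ i') (hjj : j ≠ j') (hnone : P i j = none) :
    ((∀ w, w ≠ j → w ≠ j' → L i w ≠ L i j') ∧ (∀ v, v ≠ i → v ≠ i' → L v j ≠ L i j')) ∨
    ((∀ w, w ≠ j → w ≠ j' → L i w ≠ L i' j) ∧ (∀ v, v ≠ i → v ≠ i' → L v j ≠ L i' j)) := by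
  have hXb : ∀ w, w ≠ j → w ≠ j' → L i w ≠ L i j' :=
    fun w _ hw2 h => hw2 (hLat.1 i h)
  have hYc : ∀ v, v ≠ i → v ≠ i' → L v j ≠ L i' j :=
    fun v _ hv2 h => hv2 (hLat.2 j h)
  by_cases HYb : ∀ v, v ≠ i → v ≠ i' → L v j ≠ L i j'
  · exact Or.inl ⟨hXb, HYb⟩
  by_cases HXc : ∀ w, w ≠ j → w ≠ j' → L i w ≠ L i' j
  · exact Or.inr ⟨HXc, hYc⟩
  push_neg at HYb HXc
  obtain ⟨v, hv1, hv2, hveq⟩ := HYb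
  obtain ⟨w, hw1, hw2, hweq⟩ := HXc
  exfalso
  -- three distinct colors in row i ∩ column j
  set a := L i j
  set b := L i j'
  set c := L i' j
  have hab : a ≠ b := fun h => hjj (hLat.1 i h)
  have hac : a ≠ c := fun h => hii (hLat.2 j h)
  have hbc : b ≠ c := by
    intro h
    exact hv2 (hLat.2 j (hveq.trans h))
  have hn2 : 2 ≤ n := by
    have h1 : (i : ℕ) ≠ (i' : ℕ) := fun h => hii (Fin.ext h)
    have h2 := i.isLt
    have h3 := i'.isLt
    omega
  classical
  set R : Finset (Fin (2*n-2)) := Finset.image (L i) Finset.univ with hR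
  set C : Finset (Fin (2*n-2)) := Finset.image (fun v => L v j) Finset.univ with hC
  have hRcard : R.card = n := by
    rw [hR, Finset.card_image_of_injective _ (hLat.1 i), Finset.card_univ, Fintype.card_fin]
  have hCcard : C.card = n := by
    rw [hC, Finset.card_image_of_injective _ (hLat.2 j), Finset.card_univ, Fintype.card_fin]
  have hunion : R ∪ C = Finset.univ := by
    apply Finset.eq_univ_of_forall
    intro e
    rcases cover hLat hExt hU hnone e with ⟨w', hw'⟩ | ⟨v', hv'⟩
    · exact Finset.mem_union_left _ (Finset.mem_image.2 ⟨w', Finset.mem_univ _, hw'⟩)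
    · exact Finset.mem_union_right _ (Finset.mem_image.2 ⟨v', Finset.mem_univ _, hv'⟩)
  have hucard : (R ∪ C).card = 2*n-2 := by
    rw [hunion, Finset.card_univ, Fintype.card_fin]
  have hinter : (R ∩ C).card = 2 := by
    have := Finset.card_union_add_card_inter R C
    omega
  have hsub : ({a, b, c} : Finset (Fin (2*n-2))) ⊆ R ∩ C := by
    intro e he
    simp only [Finset.mem_insert, Finset.mem_singleton] at he
    rcases he with rfl | rfl | rfl
    · exact Finset.mem_inter.2 ⟨Finset.mem_image.2 ⟨j, Finset.mem_univ _, rfl⟩,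
        Finset.mem_image.2 ⟨i, Finset.mem_univ _, rfl⟩⟩
    · exact Finset.mem_inter.2 ⟨Finset.mem_image.2 ⟨j', Finset.mem_univ _, rfl⟩,
        Finset.mem_image.2 ⟨v, Finset.mem_univ _, hveq⟩⟩
    · exact Finset.mem_inter.2 ⟨Finset.mem_image.2 ⟨w, Finset.mem_univ _, hweq⟩,
        Finset.mem_image.2 ⟨i', Finset.mem_univ _, rfl⟩⟩
  have hcard3 : ({a, b, c} : Finset (Fin (2*n-2))).card = 3 := by
    rw [Finset.card_insert_of_notMem (by simp [hab, hac]),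
      Finset.card_insert_of_notMem (by simp [hbc]), Finset.card_singleton]
  have := Finset.card_le_card hsub
  omega

end helpers

set_option maxHeartbeats 2000000 in
theorem key {α : Type*} (a b c d : α) (A B C D : α → Prop)
    (hab : a ≠ b) (hcd : c ≠ d) (hac : a ≠ c) (hbd : b ≠ d)
    (ha : A a) (hb : B b) (hc : C c) (hd : D d)
    (h1 : A b ∨ A c) (h2 : B a ∨ B d) (h3 : C a ∨ C d) (h4 : D b ∨ D c) :
    ∃ a' b' c' d', A a' ∧ B b' ∧ C c' ∧ D d' ∧ a' ≠ b' ∧ c' ≠ d' ∧ a' ≠ c' ∧ b' ≠ d' ∧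
      ¬(a' = a ∧ b' = b ∧ c' = c ∧ d' = d) := by
  have hba := hab.symm
  have hdc := hcd.symm
  have hca := hac.symm
  have hdb := hbd.symm
  by_cases had : a = d <;> by_cases hbc : b = c <;>
  rcases h1 with h1 | h1 <;> rcases h2 with h2 | h2 <;>
    rcases h3 with h3 | h3 <;> rcases h4 with h4 | h4 <;>
  first
    | (refine ⟨b, a, a, b, ?_, ?_, ?_, ?_, ?_, ?_, ?_, ?_, ?_⟩ <;> simp_all [eq_comm]
       done)
    | (refine ⟨b, a, d, c, ?_, ?_, ?_, ?_, ?_, ?_, ?_, ?_, ?_⟩ <;> simp_all [eq_comm]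
       done)
    | (refine ⟨c, d, a, b, ?_, ?_, ?_, ?_, ?_, ?_, ?_, ?_, ?_⟩ <;> simp_all [eq_comm]
       done)
    | (refine ⟨c, d, d, c, ?_, ?_, ?_, ?_, ?_, ?_, ?_, ?_, ?_⟩ <;> simp_all [eq_comm]
       done)
    | (refine ⟨a, d, c, b, ?_, ?_, ?_, ?_, ?_, ?_, ?_, ?_, ?_⟩ <;> simp_all [eq_comm]
       done)
    | (refine ⟨c, b, a, d, ?_, ?_, ?_, ?_, ?_, ?_, ?_, ?_, ?_⟩ <;> simp_all [eq_comm]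
       done)
    | (refine ⟨a, b, d, c, ?_, ?_, ?_, ?_, ?_, ?_, ?_, ?_, ?_⟩ <;> simp_all [eq_comm]
       done)
    | (refine ⟨b, a, c, d, ?_, ?_, ?_, ?_, ?_, ?_, ?_, ?_, ?_⟩ <;> simp_all [eq_comm]
       done)
    | (refine ⟨b, d, a, c, ?_, ?_, ?_, ?_, ?_, ?_, ?_, ?_, ?_⟩ <;> simp_all [eq_comm]
       done)
    | (refine ⟨c, a, d, b, ?_, ?_, ?_, ?_, ?_, ?_, ?_, ?_, ?_⟩ <;> simp_all [eq_comm]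
       done)


lemma inj_update {m k : ℕ} (f : Fin m → Fin k) (j₁ j₂ : Fin m) (hjj : j₁ ≠ j₂)
    (a' b' : Fin k) (hinj : Function.Injective f) (hab : a' ≠ b')
    (hA : ∀ w, w ≠ j₁ → w ≠ j₂ → f w ≠ a')
    (hB : ∀ w, w ≠ j₂ → w ≠ j₁ → f w ≠ b') :
    Function.Injective (fun y => if y = j₁ then a' else if y = j₂ then b' else f y) := by
  intro y y' hEq
  dsimp only at hEq
  by_cases hy1 : y = j₁ <;> by_cases hy2 : y = j₂ <;>
    by_cases hz1 : y' = j₁ <;> by_cases hz2 : y' = j₂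
  all_goals first
    | exact absurd (hy1.symm.trans hy2) hjj
    | exact absurd (hz1.symm.trans hz2) hjj
    | exact hy1.trans hz1.symm
    | exact hy2.trans hz2.symm
    | (rw [if_pos hy1, if_neg hz1, if_pos hz2] at hEq; exact absurd hEq hab)
    | (rw [if_pos hy1, if_neg hz1, if_neg hz2] at hEq; exact absurd hEq.symm (hA y' hz1 hz2))
    | (rw [if_neg hy1, if_pos hy2, if_pos hz1] at hEq; exact absurd hEq.symm hab)
    | (rw [if_neg hy1, if_pos hy2, if_neg hz1, if_neg hz2] at hEq;
       exact absurd hEq.symm (hB y' hz2 hz1))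
    | (rw [if_neg hy1, if_neg hy2, if_pos hz1] at hEq; exact absurd hEq (hA y hy1 hy2))
    | (rw [if_neg hy1, if_neg hy2, if_neg hz1, if_pos hz2] at hEq;
       exact absurd hEq (hB y hy2 hy1))
    | (rw [if_neg hy1, if_neg hy2, if_neg hz1, if_neg hz2] at hEq; exact hinj hEq)

theorem no_uncolored_rectangle (n : ℕ)
    (P : Fin n → Fin n → Option (Fin (2*n-2)))
    (h : UniquelyExtends n (2*n-2) P) :
    ¬ ∃ (i₁ i₂ j₁ j₂ : Fin n), i₁ ≠ i₂ ∧ j₁ ≠ j₂ ∧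
      P i₁ j₁ = none ∧ P i₁ j₂ = none ∧ P i₂ j₁ = none ∧ P i₂ j₂ = none := by
  rintro ⟨i₁, i₂, j₁, j₂, hii, hjj, p11, p12, p21, p22⟩
  obtain ⟨L, ⟨hLat, hExt⟩, hU0⟩ := h
  have hU : ∀ M, (IsLatin n (2*n-2) M ∧ ExtendsPC P M) → M = L := fun M hM => hU0 M hM
  classical
  obtain ⟨a', b', c', d', hA', hB', hC', hD', h'ab, h'cd, h'ac, h'bd, hne⟩ :=
    key (L i₁ j₁) (L i₁ j₂) (L i₂ j₁) (L i₂ j₂)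
      (fun e => (∀ w, w ≠ j₁ → w ≠ j₂ → L i₁ w ≠ e) ∧ (∀ v, v ≠ i₁ → v ≠ i₂ → L v j₁ ≠ e))
      (fun e => (∀ w, w ≠ j₂ → w ≠ j₁ → L i₁ w ≠ e) ∧ (∀ v, v ≠ i₁ → v ≠ i₂ → L v j₂ ≠ e))
      (fun e => (∀ w, w ≠ j₁ → w ≠ j₂ → L i₂ w ≠ e) ∧ (∀ v, v ≠ i₂ → v ≠ i₁ → L v j₁ ≠ e))
      (fun e => (∀ w, w ≠ j₂ → w ≠ j₁ → L i₂ w ≠ e) ∧ (∀ v, v ≠ i₂ → v ≠ i₁ → L v j₂ ≠ e))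
      (fun h => hjj (hLat.1 i₁ h)) (fun h => hjj (hLat.1 i₂ h))
      (fun h => hii (hLat.2 j₁ h)) (fun h => hii (hLat.2 j₂ h))
      ⟨fun w hw1 _ hw => hw1 (hLat.1 i₁ hw), fun v hv1 _ hv => hv1 (hLat.2 j₁ hv)⟩
      ⟨fun w hw1 _ hw => hw1 (hLat.1 i₁ hw), fun v hv1 _ hv => hv1 (hLat.2 j₂ hv)⟩
      ⟨fun w hw1 _ hw => hw1 (hLat.1 i₂ hw), fun v hv1 _ hv => hv1 (hLat.2 j₁ hv)⟩
      ⟨fun w hw1 _ hw => hw1 (hLat.1 i₂ hw), fun v hv1 _ hv => hv1 (hLat.2 j₂ hv)⟩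
      (avail_pair hLat hExt hU hii hjj p11)
      (avail_pair hLat hExt hU hii hjj.symm p12)
      ((avail_pair hLat hExt hU hii.symm hjj p21).symm)
      ((avail_pair hLat hExt hU hii.symm hjj.symm p22).symm)
  set L'' : Fin n → Fin n → Fin (2*n-2) := fun x y =>
    if x = i₁ then (if y = j₁ then a' else if y = j₂ then b' else L x y)
    else if x = i₂ then (if y = j₁ then c' else if y = j₂ then d' else L x y)
    else L x y with hL''
  obtain ⟨hA1, hA2⟩ := hA'
  obtain ⟨hB1, hB2⟩ := hB'
  obtain ⟨hC1, hC2⟩ := hC'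
  obtain ⟨hD1, hD2⟩ := hD'
  have hlat : IsLatin n (2*n-2) L'' := by
    constructor
    · intro x
      by_cases hx1 : x = i₁
      · have hfun : L'' x = fun y => if y = j₁ then a' else if y = j₂ then b' else L i₁ y := by
          funext y; simp [hL'', hx1, hii, hjj, hii.symm, hjj.symm]
        rw [hfun]
        exact inj_update (L i₁) j₁ j₂ hjj a' b' (hLat.1 i₁) h'ab hA1 hB1
      · by_cases hx2 : x = i₂
        · have hfun : L'' x = fun y => if y = j₁ then c' else if y = j₂ then d' else L i₂ y := by
            funext y; simp [hL'', hx1, hx2, hii, hjj, hii.symm, hjj.symm]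
          rw [hfun]
          exact inj_update (L i₂) j₁ j₂ hjj c' d' (hLat.1 i₂) h'cd hC1 hD1
        · have hfun : L'' x = L x := by funext y; simp [hL'', hx1, hx2, hii, hjj, hii.symm, hjj.symm]
          rw [hfun]; exact hLat.1 x
    · intro y
      by_cases hy1 : y = j₁
      · have hfun : (fun x => L'' x y) =
            fun x => if x = i₁ then a' else if x = i₂ then c' else L x j₁ := by
          funext x
          by_cases hx1 : x = i₁ <;> by_cases hx2 : x = i₂ <;> simp [hL'', hx1, hx2, hy1, hii, hjj, hii.symm, hjj.symm]
        rw [hfun]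
        exact inj_update (fun x => L x j₁) i₁ i₂ hii a' c' (hLat.2 j₁) h'ac hA2 hC2
      · by_cases hy2 : y = j₂
        · have hfun : (fun x => L'' x y) =
              fun x => if x = i₁ then b' else if x = i₂ then d' else L x j₂ := by
            funext x
            by_cases hx1 : x = i₁ <;> by_cases hx2 : x = i₂ <;>
              simp [hL'', hx1, hx2, hy1, hy2, hii, hjj, hii.symm, hjj.symm]
          rw [hfun]
          exact inj_update (fun x => L x j₂) i₁ i₂ hii b' d' (hLat.2 j₂) h'bd hB2 hD2
        · have hfun : (fun x => L'' x y) = (fun x => L x y) := by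
            funext x; by_cases hx1 : x = i₁ <;> by_cases hx2 : x = i₂ <;>
              simp [hL'', hx1, hx2, hy1, hy2, hii, hjj, hii.symm, hjj.symm]
          rw [hfun]; exact hLat.2 y
  have hext : ExtendsPC P L'' := by
    intro x y c0 hsome
    by_cases hx1 : x = i₁
    · subst hx1
      by_cases hy1 : y = j₁
      · rw [hy1, p11] at hsome; cases hsome
      · by_cases hy2 : y = j₂
        · rw [hy2, p12] at hsome; cases hsome
        · simp only [hL'', if_pos rfl, if_neg hy1, if_neg hy2]
          exact hExt _ _ _ hsome
    · by_cases hx2 : x = i₂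
      · subst hx2
        by_cases hy1 : y = j₁
        · rw [hy1, p21] at hsome; cases hsome
        · by_cases hy2 : y = j₂
          · rw [hy2, p22] at hsome; cases hsome
          · simp only [hL'', if_neg hx1, if_pos rfl, if_neg hy1, if_neg hy2]
            exact hExt _ _ _ hsome
      · simp only [hL'', if_neg hx1, if_neg hx2]
        exact hExt _ _ _ hsome
  have hEqL : L'' = L := hU L'' ⟨hlat, hext⟩
  apply hne
  refine ⟨?_, ?_, ?_, ?_⟩
  · have := congrFun (congrFun hEqL i₁) j₁
    simpa [hL''] using this
  · have := congrFun (congrFun hEqL i₁) j₂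
    simpa [hL'', hjj.symm] using this
  · have := congrFun (congrFun hEqL i₂) j₁
    simpa [hL'', hii.symm] using this
  · have := congrFun (congrFun hEqL i₂) j₂
    simpa [hL'', hii.symm, hjj.symm] using this
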